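/- Let b¹, …, bⁿ ∈ ℝ^m and let C¹, …, C^L be a partition of the index set {1,…,n} (each C^ℓ nonempty). Let φ₁, φ₂ : ℝ^m → ℝ be convex functions such that for each ℓ, both φ₁ and φ₂ coincide with affine functions on the convex hull Conv{b^i : i ∈ C^ℓ}, and set x*(b) := φ₁(b) − φ₂(b). Then there exist vectors u¹,…,u^L, v¹,…,v^L ∈ ℝ^m, numbers z¹,…,zⁿ ∈ ℝ, and representatives r : {1,…,L} → {1,…,n} with r(ℓ) ∈ C^ℓ, such that: (i) for all i, j ∈ {1,…,n} (writing ℓ(j) for the index of the cell containing j) the inequalities ⟨u^{ℓ(j)}, b^i − b^j⟩ + x*(b^j) + z^j ≤ x*(b^i) + z^i and ⟨v^{ℓ(j)}, b^i − b^j⟩ + z^j ≤ z^i hold; and (ii) the policy φ(b) := max_{ℓ'} ( ⟨u^{ℓ'}, b − b^{r(ℓ')}⟩ + x*(b^{r(ℓ')}) + z^{r(ℓ')} ) − max_{ℓ'} ( ⟨v^{ℓ'}, b − b^{r(ℓ')}⟩ + z^{r(ℓ')} ) satisfies φ(b) = x*(b) for every b ∈ Conv{b^i : i ∈ C^ℓ}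 and every ℓ ∈ {1,…,L}. -/

import Mathlib

open Matrix


/-- A convex function on `ℝ^m` has a subgradient at every point. -/
lemma exists_subgrad {m : ℕ} {φ : (Fin m → ℝ) → ℝ} (hφ : ConvexOn ℝ Set.univ φ)
    (x0 : Fin m → ℝ) : ∃ u : Fin m → ℝ, ∀ y, u ⬝ᵥ (y - x0) ≤ φ y - φ x0 := by
  have hcont : Continuous φ := hφ.locallyLipschitz.continuous
  set S : Set ((Fin m → ℝ) × ℝ) := {p | φ p.1 < p.2} with hSdef
  have hSconv : Convex ℝ S := by
    intro p hp q hq α β hα hβ hαβ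
    simp only [hSdef, Set.mem_setOf_eq] at hp hq ⊢
    have h1 : φ (α • p.1 + β • q.1) ≤ α * φ p.1 + β * φ q.1 :=
      hφ.2 (Set.mem_univ _) (Set.mem_univ _) hα hβ hαβ
    have key : α * φ p.1 + β * φ q.1 < α * p.2 + β * q.2 := by
      rcases eq_or_lt_of_le hα with h | h
      · have hβ1 : β = 1 := by linarith
        rw [← h, hβ1]; simpa using hq
      · have h2 : α * φ p.1 < α * p.2 := by nlinarith
        have h3 : β * φ q.1 ≤ β * q.2 := by nlinarith
        linarith
    have hfst : (α • p + β • q).1 = α • p.1 + β • q.1 := rfl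
    have hsnd : (α • p + β • q).2 = α * p.2 + β * q.2 := rfl
    rw [hfst, hsnd]
    exact lt_of_le_of_lt h1 key
  have hSopen : IsOpen S := isOpen_lt (hcont.comp continuous_fst) continuous_snd
  have hx0 : ((x0, φ x0) : (Fin m → ℝ) × ℝ) ∉ S := by
    simp [hSdef]
  obtain ⟨f, hf⟩ := geometric_hahn_banach_open_point hSconv hSopen hx0
  set c : ℝ := f (0, 1) with hcdef
  set g : (Fin m → ℝ) → ℝ := fun y => f (y, 0) with hgdef
  have hsplit : ∀ (y : Fin m → ℝ) (t : ℝ), f (y, t) = g y + t * c := by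
    intro y t
    have h : ((y, t) : (Fin m → ℝ) × ℝ) = (y, (0:ℝ)) + t • ((0 : Fin m → ℝ), (1:ℝ)) := by
      simp [Prod.ext_iff]
    rw [h, map_add, f.map_smul]
    simp [hgdef, hcdef, smul_eq_mul]
  have hkey : ∀ (y : Fin m → ℝ) (t : ℝ), φ y < t → g y + t * c < g x0 + φ x0 * c := by
    intro y t ht
    have h := hf (y, t) ht
    rwa [hsplit, hsplit] at h
  have hc : c < 0 := by
    have h := hkey x0 (φ x0 + 1) (by linarith)
    nlinarith
  have hle : ∀ y, g y + φ y * c ≤ g x0 + φ x0 * c := by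
    intro y
    by_contra hcon
    push_neg at hcon
    have hε : 0 < (g x0 + φ x0 * c - (g y + φ y * c)) / c :=
      div_pos_of_neg_of_neg (by linarith) hc
    have h := hkey y (φ y + (g x0 + φ x0 * c - (g y + φ y * c)) / c) (by linarith)
    rw [add_mul, div_mul_cancel₀ _ (ne_of_lt hc)] at h
    linarith
  -- build the linear map y ↦ f (y, 0)
  set glin : ((Fin m → ℝ)) →ₗ[ℝ] ℝ := f.toLinearMap.comp (LinearMap.inl ℝ (Fin m → ℝ) ℝ)
    with hglin
  have hg_glin : ∀ y, g y = glin y := fun y => rfl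
  refine ⟨fun i => (-(1/c)) * glin (fun j => if i = j then 1 else 0), fun y => ?_⟩
  have hu : ∀ w : Fin m → ℝ,
      (fun i => (-(1/c)) * glin (fun j => if i = j then 1 else 0)) ⬝ᵥ w
        = (-(1/c)) * glin w := by
    intro w
    rw [LinearMap.pi_apply_eq_sum_univ glin w]
    simp only [dotProduct, Finset.mul_sum]
    refine Finset.sum_congr rfl fun i _ => ?_
    simp only [smul_eq_mul]; ring
  rw [hu (y - x0), map_sub]
  have h1 := hle y
  rw [hg_glin y, hg_glin x0] at h1
  have h3 : glin y - glin x0 ≤ (φ x0 - φ y) * c := by linarith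
  have hpos : (0:ℝ) < -(1/c) := by
    have h0 : (0:ℝ) < 1 / (-c) := div_pos one_pos (neg_pos.2 hc)
    rw [one_div, neg_inv]; rwa [one_div] at h0
  calc (-(1/c)) * (glin y - glin x0) ≤ (-(1/c)) * ((φ x0 - φ y) * c) :=
        mul_le_mul_of_nonneg_left h3 hpos.le
    _ = φ y - φ x0 := by
        field_simp
        rw [mul_div_cancel_left₀ _ (ne_of_lt hc)]
        ring


/-- A convex function affine on the convex hull of finitely many points has a common
subgradient at every point of the hull. -/
lemma common_subgrad {m n : ℕ} {φ : (Fin m → ℝ) → ℝ} (hφ : ConvexOn ℝ Set.univ φ)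
    (b : Fin n → Fin m → ℝ) (C : Finset (Fin n)) (hC : C.Nonempty)
    (a : Fin m → ℝ) (c : ℝ) (haff : ∀ p ∈ convexHull ℝ (b '' ↑C), φ p = a ⬝ᵥ p + c) :
    ∃ u, ∀ s ∈ convexHull ℝ (b '' ↑C), ∀ y, u ⬝ᵥ (y - s) ≤ φ y - φ s := by
  have hcard : (0:ℝ) < (C.card : ℝ) := by exact_mod_cast hC.card_pos
  set s0 : Fin m → ℝ := C.centerMass (fun _ => (1:ℝ)) b with hs0
  have hs0mem : s0 ∈ convexHull ℝ (b '' ↑C) :=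
    C.centerMass_mem_convexHull (fun i _ => zero_le_one)
      (by rw [Finset.sum_const, nsmul_eq_mul, mul_one]; exact hcard)
      (fun i hi => ⟨i, hi, rfl⟩)
  have hcm : C.centerMass (fun _ => (1:ℝ)) b = (C.card : ℝ)⁻¹ • ∑ i ∈ C, b i := by
    rw [Finset.centerMass]
    congr 1
    · rw [Finset.sum_const, nsmul_eq_mul, mul_one]
    · exact Finset.sum_congr rfl fun i _ => one_smul ℝ (b i)
  have hs0eq : (C.card : ℝ) • s0 = ∑ i ∈ C, b i := by
    rw [hs0, hcm, smul_smul, mul_inv_cancel₀ hcard.ne', one_smul]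
  obtain ⟨u, hu⟩ := exists_subgrad hφ s0
  -- at every vertex the subgradient inequality is an equality in the direction b i - s0
  have hvert : ∀ i ∈ C, 0 ≤ (a - u) ⬝ᵥ (b i - s0) := by
    intro i hi
    have h1 := hu (b i)
    have h2 : φ (b i) = a ⬝ᵥ b i + c := haff _ (subset_convexHull ℝ _ ⟨i, hi, rfl⟩)
    have h3 : φ s0 = a ⬝ᵥ s0 + c := haff _ hs0mem
    rw [dotProduct_sub] at h1
    rw [sub_dotProduct, dotProduct_sub, dotProduct_sub]
    linarith
  let lm : (Fin m → ℝ) →ₗ[ℝ] ℝ :=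
    { toFun := fun w => (a - u) ⬝ᵥ w
      map_add' := fun x y => dotProduct_add _ x y
      map_smul' := fun r x => by simp [dotProduct_smul, smul_eq_mul] }
  have hsum0 : ∑ i ∈ C, (a - u) ⬝ᵥ (b i - s0) = 0 := by
    have h : ∑ i ∈ C, (b i - s0) = 0 := by
      rw [Finset.sum_sub_distrib, Finset.sum_const, ← Nat.cast_smul_eq_nsmul ℝ, hs0eq,
        sub_self]
    have h2 : ∑ i ∈ C, lm (b i - s0) = lm (∑ i ∈ C, (b i - s0)) := (map_sum lm _ C).symm
    rw [h, map_zero] at h2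
    exact h2
  have heach : ∀ i ∈ C, (a - u) ⬝ᵥ (b i - s0) = 0 :=
    (Finset.sum_eq_zero_iff_of_nonneg hvert).1 hsum0
  -- the hull is contained in the halfspace {p | (a-u) ⬝ᵥ p ≤ (a-u) ⬝ᵥ s0}
  have hK : convexHull ℝ (b '' ↑C) ⊆ {p | (a - u) ⬝ᵥ p ≤ (a - u) ⬝ᵥ s0} := by
    apply convexHull_min
    · rintro p ⟨i, hi, rfl⟩
      have h := heach i hi
      rw [dotProduct_sub] at h
      show (a - u) ⬝ᵥ b i ≤ (a - u) ⬝ᵥ s0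
      linarith
    · exact convex_halfSpace_le lm.isLinear _
  -- on the hull, u agrees with a in hull directions
  have hagree : ∀ s ∈ convexHull ℝ (b '' ↑C), u ⬝ᵥ s - u ⬝ᵥ s0 = a ⬝ᵥ s - a ⬝ᵥ s0 := by
    intro s hs
    have h1 : (a - u) ⬝ᵥ s ≤ (a - u) ⬝ᵥ s0 := hK hs
    have h2 := hu s
    have h3 : φ s = a ⬝ᵥ s + c := haff _ hs
    have h4 : φ s0 = a ⬝ᵥ s0 + c := haff _ hs0mem
    rw [sub_dotProduct, sub_dotProduct] at h1
    rw [dotProduct_sub] at h2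
    linarith
  refine ⟨u, fun s hs y => ?_⟩
  have h1 := hu y
  have h2 := hagree s hs
  have h3 : φ s = a ⬝ᵥ s + c := haff _ hs
  have h4 : φ s0 = a ⬝ᵥ s0 + c := haff _ hs0mem
  rw [dotProduct_sub] at h1 ⊢
  linarith

/-- Theorem 1 of the paper in composite form: the training inequality system has a
feasible solution and the resulting PLDC policy recovers the optimal-solution map `xstar`
on the convex hull of each cell of training right-hand sides. -/
theorem stmt_3 (m n L : ℕ) (hL : 0 < L)
    (b : Fin n → (Fin m → ℝ))
    (C : Fin L → Finset (Fin n))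
    (hCne : ∀ ℓ', (C ℓ').Nonempty)
    (hpart : ∀ i : Fin n, ∃! ℓ', i ∈ C ℓ')
    (φ₁ φ₂ : (Fin m → ℝ) → ℝ)
    (hφ₁ : ConvexOn ℝ Set.univ φ₁) (hφ₂ : ConvexOn ℝ Set.univ φ₂)
    (haff₁ : ∀ ℓ', ∃ (a : Fin m → ℝ) (c : ℝ),
      ∀ p ∈ convexHull ℝ (b '' ↑(C ℓ')), φ₁ p = a ⬝ᵥ p + c)
    (haff₂ : ∀ ℓ', ∃ (a : Fin m → ℝ) (c : ℝ),
      ∀ p ∈ convexHull ℝ (b '' ↑(C ℓ')), φ₂ p = a ⬝ᵥ p + c)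
    (xstar : (Fin m → ℝ) → ℝ) (hxstar : ∀ p, xstar p = φ₁ p - φ₂ p) :
    ∃ (u v : Fin L → (Fin m → ℝ)) (z : Fin n → ℝ) (r : Fin L → Fin n),
      (∀ ℓ', r ℓ' ∈ C ℓ') ∧
      (∀ i j : Fin n, ∀ ℓ', j ∈ C ℓ' →
        u ℓ' ⬝ᵥ (b i - b j) + xstar (b j) + z j ≤ xstar (b i) + z i ∧
        v ℓ' ⬝ᵥ (b i - b j) + z j ≤ z i) ∧
      (∀ ℓ', ∀ p ∈ convexHull ℝ (b '' ↑(C ℓ')),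
        (Finset.univ.sup' (Finset.univ_nonempty_iff.mpr ⟨⟨0, hL⟩⟩)
            (fun ℓ'' => u ℓ'' ⬝ᵥ (p - b (r ℓ'')) + xstar (b (r ℓ'')) + z (r ℓ'')))
          - (Finset.univ.sup' (Finset.univ_nonempty_iff.mpr ⟨⟨0, hL⟩⟩)
            (fun ℓ'' => v ℓ'' ⬝ᵥ (p - b (r ℓ'')) + z (r ℓ'')))
        = xstar p) := by
  choose a₁ c₁ ha₁ using haff₁
  choose a₂ c₂ ha₂ using haff₂
  choose u hu using fun ℓ' => common_subgrad hφ₁ b (C ℓ') (hCne ℓ') (a₁ ℓ') (c₁ ℓ') (ha₁ ℓ')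
  choose v hv using fun ℓ' => common_subgrad hφ₂ b (C ℓ') (hCne ℓ') (a₂ ℓ') (c₂ ℓ') (ha₂ ℓ')
  choose r hr using fun ℓ' => hCne ℓ'
  refine ⟨u, v, fun i => φ₂ (b i), r, hr, ?_, ?_⟩
  · intro i j ℓ' hj
    have hbj : b j ∈ convexHull ℝ (b '' ↑(C ℓ')) := subset_convexHull ℝ _ ⟨j, hj, rfl⟩
    have h1 := hu ℓ' (b j) hbj (b i)
    have h2 := hv ℓ' (b j) hbj (b i)
    rw [hxstar, hxstar]
    exact ⟨by linarith, by linarith⟩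
  · intro ℓ' p hp
    have hbr : ∀ ℓ'', b (r ℓ'') ∈ convexHull ℝ (b '' ↑(C ℓ'')) :=
      fun ℓ'' => subset_convexHull ℝ _ ⟨r ℓ'', hr ℓ'', rfl⟩
    have h1 : (Finset.univ.sup' (Finset.univ_nonempty_iff.mpr ⟨⟨0, hL⟩⟩)
        (fun ℓ'' => u ℓ'' ⬝ᵥ (p - b (r ℓ'')) + xstar (b (r ℓ'')) + φ₂ (b (r ℓ'')))) = φ₁ p := by
      apply le_antisymm
      · apply Finset.sup'_le
        intro ℓ'' _
        have h := hu ℓ'' (b (r ℓ'')) (hbr ℓ'') p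
        rw [hxstar]
        linarith
      · refine Finset.le_sup'_of_le _ (Finset.mem_univ ℓ') ?_
        have h := hu ℓ' p hp (b (r ℓ'))
        rw [dotProduct_sub] at h
        rw [hxstar, dotProduct_sub]
        linarith
    have h2 : (Finset.univ.sup' (Finset.univ_nonempty_iff.mpr ⟨⟨0, hL⟩⟩)
        (fun ℓ'' => v ℓ'' ⬝ᵥ (p - b (r ℓ'')) + φ₂ (b (r ℓ'')))) = φ₂ p := by
      apply le_antisymm
      · apply Finset.sup'_le
        intro ℓ'' _
        have h := hv ℓ'' (b (r ℓ'')) (hbr ℓ'') p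
        linarith
      · refine Finset.le_sup'_of_le _ (Finset.mem_univ ℓ') ?_
        have h := hv ℓ' p hp (b (r ℓ'))
        rw [dotProduct_sub] at h
        rw [dotProduct_sub]
        linarith
    rw [h1, h2, hxstar]
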